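/- Every continuous real-valued function on a product [0,1]^κ of unit intervals depends on only countably many coordinates: there is a countable S ⊆ κ such that f(x) = f(y) whenever x and y agree on S. -/
import Mathlib


/-- Every continuous real-valued function on `[0,1]^κ` depends on only countably
many coordinates. -/
theorem stmt_6 {κ : Type*} (f : C(κ → Set.Icc (0 : ℝ) 1, ℝ)) :
    ∃ S : Set κ, S.Countable ∧
      ∀ x y : κ → Set.Icc (0 : ℝ) 1, (∀ s ∈ S, x s = y s) → f x = f y := by
  have hu : UniformContinuous f := CompactSpace.uniformContinuous_of_continuous f.continuous
  have key : ∀ n : ℕ, ∃ F : Set κ, F.Finite ∧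
      ∀ x y : κ → Set.Icc (0 : ℝ) 1, (∀ s ∈ F, x s = y s) →
        dist (f x) (f y) < 1 / (n + 1) := by
    intro n
    have hε : (0 : ℝ) < 1 / (n + 1) := by positivity
    have hmem : {p : (κ → Set.Icc (0:ℝ) 1) × (κ → Set.Icc (0:ℝ) 1) |
        dist (f p.1) (f p.2) < 1 / (n + 1)} ∈ uniformity (κ → Set.Icc (0:ℝ) 1) :=
      hu (Metric.dist_mem_uniformity hε)
    rw [Pi.uniformity, Filter.mem_iInf] at hmem
    obtain ⟨I, hIfin, V, hV, hEq⟩ := hmem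
    refine ⟨I, hIfin, fun x y hxy => ?_⟩
    have : (x, y) ∈ ⋂ i, V i := by
      refine Set.mem_iInter.2 fun i => ?_
      obtain ⟨W, hW, hWsub⟩ := Filter.mem_comap.1 (hV i)
      apply hWsub
      have : x i.1 = y i.1 := hxy i.1 i.2
      simpa [this] using refl_mem_uniformity hW
    rw [← hEq] at this
    exact this
  choose F hFfin hF using key
  refine ⟨⋃ n, F n, Set.countable_iUnion fun n => (hFfin n).countable, fun x y hxy => ?_⟩
  have hd : ∀ n : ℕ, dist (f x) (f y) < 1 / (n + 1) := fun n =>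
    hF n x y fun s hs => hxy s (Set.mem_iUnion.2 ⟨n, hs⟩)
  have : dist (f x) (f y) ≤ 0 := by
    by_contra h
    push_neg at h
    obtain ⟨n, hn⟩ := exists_nat_one_div_lt h
    exact absurd (hd n) (not_lt.2 hn.le)
  exact dist_le_zero.1 this
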